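/- Fix an integer r ≥ 2. For each integer b ≥ r let p_c(b) := 1 - 1/(max_{x∈[0,1]} g_b^r(x)), where g_b^r(x) = ∑_{i=0}^{r-1} C(b,i) x^{b-i-1} (1-x)^i. Then, as b → ∞ through the integers, p_c(b) = (1 - 1/r) · ((r-1)!/b^r)^{1/(r-1)} · (1 + o(1)); that is, lim_{b→∞} p_c(b) / ( (1 - 1/r)·((r-1)!/b^r)^{1/(r-1)} ) = 1. -/

import Mathlib

noncomputable def g (r k : ℕ) (x : ℝ) : ℝ :=
  ∑ i ∈ Finset.range r, (k.choose i : ℝ) * x ^ (k - i - 1) * (1 - x) ^ i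

namespace PCaux
open Finset Filter Real Set

variable (r : ℕ)

noncomputable def Phi (b : ℕ) (e : ℝ) : ℝ :=
  ∑ i ∈ Finset.Ico r (b+1), (b.choose i : ℝ) * e^i * (1-e)^(b-i)

noncomputable def Kc : ℝ := r * r.factorial * 2^r
noncomputable def tb (b : ℕ) : ℝ := (b:ℝ) ^ (-(2*(r:ℝ)-1)/(2*((r:ℝ)-1)))
noncomputable def Ab (b : ℕ) : ℝ := (b.choose r : ℝ) * (1 - tb r b)^(b-r)
noncomputable def U (b : ℕ) : ℝ :=
  (1 - 1/(r:ℝ)) * ((r:ℝ) * Ab r b) ^ (-(1:ℝ)/((r:ℝ)-1)) / (1 - tb r b)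
noncomputable def W (b : ℕ) : ℝ :=
  (b.choose r : ℝ) * (tb r b)^(r-1) * (1 - Kc r / b)^(b-r)
noncomputable def epsb (b : ℕ) : ℝ := ((r:ℝ) * (b.choose r : ℝ)) ^ (-(1:ℝ)/((r:ℝ)-1))
noncomputable def Lo (b : ℕ) : ℝ :=
  epsb r b * (1 - (1/(r:ℝ))/(1 - b * epsb r b)) / (1 - epsb r b)

lemma binom_one (b : ℕ) (e : ℝ) :
    ∑ i ∈ Finset.range (b+1), (b.choose i : ℝ) * e^i * (1-e)^(b-i) = 1 := by
  have h := add_pow e (1-e) b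
  simp only [add_sub_cancel, one_pow] at h
  exact (Finset.sum_congr rfl fun i _ => by ring).trans h.symm

lemma g_eq_sum (b : ℕ) (hb : r ≤ b) (e : ℝ) :
    (1-e) * g r b (1-e)
      = ∑ i ∈ Finset.range r, (b.choose i : ℝ) * e^i * (1-e)^(b-i) := by
    rw [g, Finset.mul_sum]
    refine Finset.sum_congr rfl fun i hi => ?_
    have hi' : i < r := Finset.mem_range.mp hi
    have hbi : b - i - 1 + 1 = b - i := by omega
    have he : (1 - (1-e)) = e := by ring
    have hp := pow_succ (1-e) (b-i-1)
    rw [hbi] at hp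
    rw [he, hp]
    ring

lemma identity (b : ℕ) (hb : r ≤ b) (e : ℝ) :
    (1-e) * g r b (1-e) = 1 - Phi r b e := by
  have h1 := g_eq_sum r b hb e
  have h2 := binom_one b e
  rw [← Finset.sum_range_add_sum_Ico _ (by omega : r ≤ b + 1)] at h2
  rw [h1, ← Phi] at *
  linarith [h2]

lemma Phi_ge (b : ℕ) (hb : r ≤ b) {e : ℝ} (he : 0 ≤ e) (he1 : e ≤ 1) :
    (b.choose r : ℝ) * e^r * (1-e)^(b-r) ≤ Phi r b e := by
  apply Finset.single_le_sum (f := fun i => (b.choose i : ℝ) * e^i * (1-e)^(b-i))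
  · intro i _
    exact mul_nonneg (mul_nonneg (by positivity) (pow_nonneg he _))
      (pow_nonneg (by linarith) _)
  · exact Finset.mem_Ico.mpr ⟨le_refl r, by omega⟩

lemma choose_le_mul_pow (b j : ℕ) : b.choose (r+j) ≤ b.choose r * b^j := by
  induction j with
  | zero => simp
  | succ j ih =>
      have h1 : b.choose (r+j+1) ≤ b.choose (r+j+1) * (r+j+1) :=
        Nat.le_mul_of_pos_right _ (by omega)
      have h2 : b.choose (r+j+1) * (r+j+1) = b.choose (r+j) * (b - (r+j)) :=
        Nat.choose_succ_right_eq b (r+j)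
      calc b.choose (r+(j+1)) = b.choose (r+j+1) := by ring_nf
        _ ≤ b.choose (r+j) * (b - (r+j)) := by omega
        _ ≤ b.choose (r+j) * b := Nat.mul_le_mul_left _ (Nat.sub_le _ _)
        _ ≤ (b.choose r * b^j) * b := Nat.mul_le_mul_right _ ih
        _ = b.choose r * b^(j+1) := by ring

lemma Phi_le (b : ℕ) (hr : 1 ≤ r) (hb : r ≤ b) {e : ℝ} (he : 0 ≤ e)
    (hbe : (b:ℝ)*e < 1) :
    Phi r b e ≤ (b.choose r : ℝ) * e^r / (1 - (b:ℝ)*e) := by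
  have hb1 : (1:ℝ) ≤ (b:ℝ) := by exact_mod_cast (by omega : 1 ≤ b)
  have he1 : e < 1 := by nlinarith
  have hstep : Phi r b e ≤ ∑ i ∈ Finset.Ico r (b+1),
      (b.choose r : ℝ) * e^r * ((b:ℝ)*e)^(i-r) := by
    apply Finset.sum_le_sum
    intro i hi
    obtain ⟨hir, hib⟩ := Finset.mem_Ico.mp hi
    have hchoose : (b.choose i : ℝ) ≤ (b.choose r : ℝ) * (b:ℝ)^(i-r) := by
      have h := choose_le_mul_pow r b (i - r)
      rw [show r + (i - r) = i by omega] at h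
      exact_mod_cast h
    have hei : e^i = e^r * e^(i-r) := by
      rw [← pow_add, show r + (i - r) = i by omega]
    have h1e : (1-e)^(b-i) ≤ 1 := pow_le_one₀ (by linarith) (by linarith)
    calc (b.choose i : ℝ) * e^i * (1-e)^(b-i)
        ≤ (b.choose i : ℝ) * e^i * 1 := by
          apply mul_le_mul_of_nonneg_left h1e
          exact mul_nonneg (by positivity) (pow_nonneg he _)
      _ = (b.choose i : ℝ) * (e^r * e^(i-r)) := by rw [← hei]; ring
      _ ≤ ((b.choose r : ℝ) * (b:ℝ)^(i-r)) * (e^r * e^(i-r)) := by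
          apply mul_le_mul_of_nonneg_right hchoose
          exact mul_nonneg (pow_nonneg he _) (pow_nonneg he _)
      _ = (b.choose r : ℝ) * e^r * ((b:ℝ)*e)^(i-r) := by rw [mul_pow]; ring
  have hgeom : ∑ i ∈ Finset.Ico r (b+1), (b.choose r : ℝ) * e^r * ((b:ℝ)*e)^(i-r)
      ≤ (b.choose r : ℝ) * e^r / (1 - (b:ℝ)*e) := by
    rw [Finset.sum_Ico_eq_sum_range]
    simp only [Nat.add_sub_cancel_left]
    rw [← Finset.mul_sum]
    have hq : 0 ≤ (b:ℝ)*e := by positivity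
    have hsum : ∑ j ∈ Finset.range (b+1-r), ((b:ℝ)*e)^j ≤ 1/(1 - (b:ℝ)*e) := by
      rw [le_div_iff₀ (by linarith)]
      have hg := geom_sum_mul ((b:ℝ)*e) (b+1-r)
      have hpn : (0:ℝ) ≤ ((b:ℝ)*e)^(b+1-r) := pow_nonneg hq _
      nlinarith [hg]
    calc (b.choose r : ℝ) * e^r * ∑ j ∈ Finset.range (b+1-r), ((b:ℝ)*e)^j
        ≤ (b.choose r : ℝ) * e^r * (1/(1 - (b:ℝ)*e)) := by
          apply mul_le_mul_of_nonneg_left hsum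
          exact mul_nonneg (by positivity) (pow_nonneg he _)
      _ = (b.choose r : ℝ) * e^r / (1 - (b:ℝ)*e) := by ring
  exact hstep.trans hgeom

lemma Kc_pos (hr : 1 ≤ r) : 0 < Kc r := by
  have : (0:ℝ) < r := by exact_mod_cast hr
  have : (0:ℝ) < r.factorial := by exact_mod_cast r.factorial_pos
  unfold Kc; positivity

lemma one_le_Kc (hr : 1 ≤ r) : 1 ≤ Kc r := by
  have h1 : (1:ℝ) ≤ r := by exact_mod_cast hr
  have h2 : (1:ℝ) ≤ r.factorial := by exact_mod_cast r.factorial_pos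
  have h3 : (1:ℝ) ≤ 2^r := one_le_pow₀ (by norm_num)
  have h12 : (1:ℝ) ≤ (r:ℝ) * r.factorial := by nlinarith
  unfold Kc; nlinarith

lemma tail_le (b : ℕ) (hr : 2 ≤ r) (hb : 4*r ≤ b) {e : ℝ} (heK : Kc r / b ≤ e)
    (he1 : e ≤ 1) :
    ∑ i ∈ Finset.range r, (b.choose i : ℝ) * e^i * (1-e)^(b-i) ≤ 1 - e := by
  have hbpos : 0 < b := by omega
  have hbR : (0:ℝ) < b := by exact_mod_cast hbpos
  have he0 : 0 < e := lt_of_lt_of_le (div_pos (Kc_pos r (by omega)) hbR) heK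
  have hbe1 : 1 ≤ (b:ℝ)*e := by
    have : Kc r ≤ (b:ℝ)*e := by
      rw [div_le_iff₀ hbR] at heK; linarith [heK]
    linarith [one_le_Kc r (by omega)]
  -- step 1 : termwise bound
  have hterm : ∀ i ∈ Finset.range r, (b.choose i : ℝ) * e^i * (1-e)^(b-i)
      ≤ ((b:ℝ)*e)^(r-1) * (1-e)^(b-r) * (1-e) := by
    intro i hi
    have hir : i < r := Finset.mem_range.mp hi
    have h1 : (b.choose i : ℝ) * e^i ≤ ((b:ℝ)*e)^i := by
      rw [mul_pow]
      apply mul_le_mul_of_nonneg_right _ (pow_nonneg he0.le _)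
      exact_mod_cast Nat.choose_le_pow b i
    have h2 : ((b:ℝ)*e)^i ≤ ((b:ℝ)*e)^(r-1) :=
      pow_le_pow_right₀ hbe1 (by omega)
    have h3 : (1-e)^(b-i) ≤ (1-e)^(b-r) * (1-e) := by
      have hbi : b - i = (b - i - 1) + 1 := by omega
      rw [hbi, pow_succ]
      apply mul_le_mul_of_nonneg_right _ (by linarith)
      exact pow_le_pow_of_le_one (by linarith) (by linarith) (by omega)
    calc (b.choose i : ℝ) * e^i * (1-e)^(b-i)
        ≤ ((b:ℝ)*e)^(r-1) * (1-e)^(b-i) := by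
          apply mul_le_mul_of_nonneg_right (h1.trans h2) (pow_nonneg (by linarith) _)
      _ ≤ ((b:ℝ)*e)^(r-1) * ((1-e)^(b-r) * (1-e)) := by
          apply mul_le_mul_of_nonneg_left h3 (pow_nonneg (by linarith) _)
      _ = ((b:ℝ)*e)^(r-1) * (1-e)^(b-r) * (1-e) := by ring
  have hsum : ∑ i ∈ Finset.range r, (b.choose i : ℝ) * e^i * (1-e)^(b-i)
      ≤ (r:ℝ) * (((b:ℝ)*e)^(r-1) * (1-e)^(b-r)) * (1-e) := by
    calc ∑ i ∈ Finset.range r, (b.choose i : ℝ) * e^i * (1-e)^(b-i)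
        ≤ ∑ _i ∈ Finset.range r, ((b:ℝ)*e)^(r-1) * (1-e)^(b-r) * (1-e) :=
          Finset.sum_le_sum hterm
      _ = (r:ℝ) * (((b:ℝ)*e)^(r-1) * (1-e)^(b-r)) * (1-e) := by
          rw [Finset.sum_const, Finset.card_range]; push_cast; ring
  -- step 2 : the bracket is ≤ 1
  set K : ℕ := b + 1 - 2*r with hK
  have h2K : (b:ℝ) ≤ 2 * (K:ℝ) := by
    have : b ≤ 2 * K := by omega
    exact_mod_cast this
  have hC2 : ((K:ℝ))^r / r.factorial ≤ ((b-r).choose r : ℝ) := by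
    have h := Nat.pow_le_choose (α := ℝ) r (b - r)
    rwa [show b - r + 1 - r = K by omega] at h
  have hC2pos : (0:ℝ) < ((b-r).choose r : ℝ) := by
    have : 0 < (b-r).choose r := Nat.choose_pos (by omega)
    exact_mod_cast this
  -- (1-e)^(b-r) * ((b-r).choose r * e^r) ≤ 1
  have hbeta : (1-e)^(b-r) * (((b-r).choose r : ℝ) * e^r) ≤ 1 := by
    have hbin : ((b-r).choose r : ℝ) * e^r ≤ (1+e)^(b-r) := by
      have h := add_pow e 1 (b-r)
      simp only [one_pow, mul_one] at h
      have hmem : r ∈ Finset.range (b - r + 1) := Finset.mem_range.mpr (by omega)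
      have hterm' : (e^r * ((b-r).choose r : ℝ)) ≤
          ∑ k ∈ Finset.range (b - r + 1), e^k * ((b-r).choose k : ℝ) :=
        Finset.single_le_sum (f := fun k => e^k * (((b-r).choose k : ℕ) : ℝ))
          (fun k _ => by positivity) hmem
      calc ((b-r).choose r : ℝ) * e^r = e^r * ((b-r).choose r : ℝ) := by ring
        _ ≤ ∑ k ∈ Finset.range (b - r + 1), e^k * ((b-r).choose k : ℝ) := hterm'
        _ = (e+1)^(b-r) := h.symm
        _ = (1+e)^(b-r) := by ring_nf
    calc (1-e)^(b-r) * (((b-r).choose r : ℝ) * e^r)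
        ≤ (1-e)^(b-r) * (1+e)^(b-r) :=
          mul_le_mul_of_nonneg_left hbin (pow_nonneg (by linarith) _)
      _ = ((1-e)*(1+e))^(b-r) := by rw [← mul_pow]
      _ ≤ 1 := by
          apply pow_le_one₀ (by nlinarith) (by nlinarith)
  -- r * (b*e)^(r-1) ≤ choose(b-r, r) * e^r
  have hkey : (r:ℝ) * ((b:ℝ)*e)^(r-1) ≤ ((b-r).choose r : ℝ) * e^r := by
    have hrr : (r:ℝ) * (b:ℝ)^(r-1) ≤ ((b-r).choose r : ℝ) * e := by
      have hCK : (r:ℝ) * (b:ℝ)^r ≤ ((b-r).choose r : ℝ) * Kc r := by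
        have hfac : (0:ℝ) < r.factorial := by exact_mod_cast r.factorial_pos
        have h2Kpow : (b:ℝ)^r ≤ (2*(K:ℝ))^r :=
          pow_le_pow_left₀ (by positivity) h2K r
        have : ((b-r).choose r : ℝ) * Kc r ≥ ((K:ℝ)^r / r.factorial) * Kc r := by
          apply mul_le_mul_of_nonneg_right hC2 (Kc_pos r (by omega)).le
        have hKcval : ((K:ℝ)^r / r.factorial) * Kc r = (r:ℝ) * (2*(K:ℝ))^r := by
          unfold Kc
          field_simp
          ring
        nlinarith [this, hKcval, h2Kpow, (by exact_mod_cast (by omega : 1 ≤ r) : (1:ℝ) ≤ r)]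
      have hKe : ((b-r).choose r : ℝ) * Kc r ≤ ((b-r).choose r : ℝ) * ((b:ℝ)*e) := by
        apply mul_le_mul_of_nonneg_left _ hC2pos.le
        rw [div_le_iff₀ hbR] at heK; linarith
      have hbr : (b:ℝ)^r = (b:ℝ)^(r-1) * b := by
        rw [← pow_succ, show r - 1 + 1 = r by omega]
      nlinarith [hCK, hKe, hbr]
    have hpow : ((b:ℝ)*e)^(r-1) = (b:ℝ)^(r-1) * e^(r-1) := mul_pow _ _ _
    have her : e^r = e^(r-1) * e := by
      rw [← pow_succ, show r - 1 + 1 = r by omega]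
    have hee : (0:ℝ) ≤ e^(r-1) := pow_nonneg he0.le _
    nlinarith [mul_le_mul_of_nonneg_right hrr hee]
  -- combine
  have hbr1 : (r:ℝ) * (((b:ℝ)*e)^(r-1) * (1-e)^(b-r)) ≤ 1 := by
    have hP : (0:ℝ) ≤ (1-e)^(b-r) := pow_nonneg (by linarith) _
    calc (r:ℝ) * (((b:ℝ)*e)^(r-1) * (1-e)^(b-r))
        = ((r:ℝ) * ((b:ℝ)*e)^(r-1)) * (1-e)^(b-r) := by ring
      _ ≤ (((b-r).choose r : ℝ) * e^r) * (1-e)^(b-r) :=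
          mul_le_mul_of_nonneg_right hkey hP
      _ = (1-e)^(b-r) * (((b-r).choose r : ℝ) * e^r) := by ring
      _ ≤ 1 := hbeta
  calc ∑ i ∈ Finset.range r, (b.choose i : ℝ) * e^i * (1-e)^(b-i)
      ≤ (r:ℝ) * (((b:ℝ)*e)^(r-1) * (1-e)^(b-r)) * (1-e) := hsum
    _ ≤ 1 * (1-e) := mul_le_mul_of_nonneg_right hbr1 (by linarith)
    _ = 1 - e := by ring

lemma young_aux (hr : 2 ≤ r) {A e : ℝ} (hA : 0 < A) (he : 0 ≤ e) :
    e ≤ A * e^r + (1 - 1/(r:ℝ)) * ((r:ℝ)*A) ^ (-(1:ℝ)/((r:ℝ)-1)) := by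
  set s : ℝ := (r:ℝ) with hs
  have hs2 : (2:ℝ) ≤ s := by rw [hs]; exact_mod_cast hr
  have hs0 : 0 < s := by linarith
  have hs1 : 0 < s - 1 := by linarith
  have hP : 0 < s * A := by positivity
  have hconj : Real.HolderConjugate s (s/(s-1)) :=
    (Real.holderConjugate_iff_eq_conjExponent (by linarith)).mpr rfl
  have hY := Real.young_inequality_of_nonneg
    (a := e * (s*A) ^ ((1:ℝ)/s)) (b := ((s*A)) ^ (-(1:ℝ)/s))
    (by positivity) (Real.rpow_nonneg hP.le _) hconj
  have hab : e * (s*A) ^ ((1:ℝ)/s) * ((s*A)) ^ (-(1:ℝ)/s) = e := by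
    rw [mul_assoc, ← Real.rpow_add hP]
    norm_num
    rw [show s⁻¹ + -1/s = 0 by field_simp; ring, Real.rpow_zero, mul_one]
  have hap : (e * (s*A) ^ ((1:ℝ)/s)) ^ s / s = A * e^r := by
    rw [Real.mul_rpow he (Real.rpow_nonneg hP.le _)]
    rw [← Real.rpow_natCast e r, ← hs]
    rw [← Real.rpow_mul hP.le]
    rw [one_div_mul_cancel hs0.ne', Real.rpow_one]
    field_simp
  have hbq : (((s*A)) ^ (-(1:ℝ)/s)) ^ (s/(s-1)) / (s/(s-1))
      = (1 - 1/s) * (s*A) ^ (-(1:ℝ)/(s-1)) := by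
    rw [← Real.rpow_mul hP.le]
    rw [show (-(1:ℝ)/s)*(s/(s-1)) = -(1:ℝ)/(s-1) by
      field_simp]
    have hq0 : s/(s-1) ≠ 0 := by positivity
    field_simp
  rw [hab, hap, hbq] at hY
  exact hY
lemma U_nonneg (b : ℕ) (hr : 2 ≤ r) (htb : tb r b < 1) : 0 ≤ U r b := by
  have hrR : (2:ℝ) ≤ (r:ℝ) := by exact_mod_cast hr
  have h1 : (0:ℝ) ≤ 1 - 1/(r:ℝ) := by
    rw [sub_nonneg]
    rw [div_le_one (by linarith)]
    linarith
  have h2 : (0:ℝ) ≤ ((r:ℝ) * Ab r b) ^ (-(1:ℝ)/((r:ℝ)-1)) := by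
    apply Real.rpow_nonneg
    apply mul_nonneg (by linarith)
    exact mul_nonneg (Nat.cast_nonneg _) (pow_nonneg (by linarith) _)
  rw [U]
  exact div_nonneg (mul_nonneg h1 h2) (by linarith)

lemma upper (b : ℕ) (hr : 2 ≤ r) (hb : 4*r + 1 ≤ b)
    (htK : tb r b ≤ Kc r / b) (hKb : Kc r / b ≤ 1/2) (hW : 1 ≤ W r b) :
    ∀ x ∈ Set.Icc (0:ℝ) 1, g r b x ≤ 1 + U r b := by
  have hbR : (0:ℝ) < b := by exact_mod_cast (by omega : 0 < b)
  have htb0 : 0 ≤ tb r b := Real.rpow_nonneg hbR.le _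
  have htb12 : tb r b ≤ 1/2 := htK.trans hKb
  have hCpos : (0:ℝ) < (b.choose r : ℝ) := by
    exact_mod_cast Nat.choose_pos (by omega : r ≤ b)
  have hApos : 0 < Ab r b := by
    apply mul_pos hCpos
    apply pow_pos (by linarith)
  have hU0 : 0 ≤ U r b := U_nonneg r b hr (by linarith)
  intro x hx
  obtain ⟨hx0, hx1⟩ := hx
  set e : ℝ := 1 - x with hedef
  have hxe : x = 1 - e := by rw [hedef]; ring
  have he0 : 0 ≤ e := by rw [hedef]; linarith
  have he1 : e ≤ 1 := by rw [hedef]; linarith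
  by_cases hxz : x = 0
  · have hg0 : g r b x = 0 := by
      rw [hxz, g]
      apply Finset.sum_eq_zero
      intro i hi
      have hir : i < r := Finset.mem_range.mp hi
      rw [zero_pow (by omega : b - i - 1 ≠ 0)]
      ring
    rw [hg0]; linarith
  · have hxpos : 0 < x := lt_of_le_of_ne hx0 (Ne.symm hxz)
    have hid : x * g r b x = 1 - Phi r b e := by
      rw [hxe]; exact identity r b (by omega) e
    have hsum : x * g r b x
        = ∑ i ∈ Finset.range r, (b.choose i : ℝ) * e^i * (1-e)^(b-i) := by
      rw [hxe]; exact g_eq_sum r b (by omega) e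
    rcases le_total e (tb r b) with hcase | hcase
    · -- region A
      have hPhiA : Ab r b * e^r ≤ Phi r b e := by
        have h1 := Phi_ge r b (by omega) he0 he1
        have h2 : (1 - tb r b)^(b-r) ≤ (1-e)^(b-r) :=
          pow_le_pow_left₀ (by linarith) (by linarith) _
        calc Ab r b * e^r = (b.choose r : ℝ) * (1 - tb r b)^(b-r) * e^r := by
              rw [Ab]
          _ ≤ (b.choose r : ℝ) * (1-e)^(b-r) * e^r := by
              apply mul_le_mul_of_nonneg_right _ (pow_nonneg he0 _)
              exact mul_le_mul_of_nonneg_left h2 hCpos.le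
          _ = (b.choose r : ℝ) * e^r * (1-e)^(b-r) := by ring
          _ ≤ Phi r b e := h1
      have hyoung := young_aux r hr hApos he0
      have hY : (1 - 1/(r:ℝ)) * ((r:ℝ) * Ab r b) ^ (-(1:ℝ)/((r:ℝ)-1))
          = U r b * (1 - tb r b) := by
        rw [U, div_mul_cancel₀]
        exact ne_of_gt (by linarith)
      have hcomp : x * g r b x ≤ x * (1 + U r b) := by
        have h3 : e * U r b ≤ tb r b * U r b :=
          mul_le_mul_of_nonneg_right hcase hU0
        have h4 : x * (1 + U r b) = 1 - e + U r b * (1 - e) := by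
          rw [hxe]; ring
        rw [hid]
        have : 1 - Phi r b e ≤ 1 - Ab r b * e^r := by linarith
        have h5 : U r b * (1 - tb r b) ≤ U r b * (1 - e) := by
          apply mul_le_mul_of_nonneg_left _ hU0
          linarith
        rw [h4]
        nlinarith [hyoung, hY, h5]
      exact le_of_mul_le_mul_left hcomp hxpos
    · -- regions B/C and D
      have hgle1 : x * g r b x ≤ x := by
        rcases le_total e (Kc r / b) with hcase2 | hcase2
        · -- region B/C
          have hKb1 : Kc r / b ≤ 1 := by linarith
          have hW' : e * W r b ≤ Phi r b e := by
            have h1 := Phi_ge r b (by omega) he0 he1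
            have h2 : (tb r b)^(r-1) ≤ e^(r-1) :=
              pow_le_pow_left₀ htb0 hcase _
            have h3 : (1 - Kc r / b)^(b-r) ≤ (1-e)^(b-r) :=
              pow_le_pow_left₀ (by linarith) (by linarith) _
            have her : e^r = e * e^(r-1) := by
              rw [← pow_succ', show r - 1 + 1 = r by omega]
            calc e * W r b
                = (b.choose r : ℝ) * (e * (tb r b)^(r-1)) * (1 - Kc r / b)^(b-r) := by
                  rw [W]; ring
              _ ≤ (b.choose r : ℝ) * (e * e^(r-1)) * (1-e)^(b-r) := by
                  apply mul_le_mul (mul_le_mul_of_nonneg_left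
                    (mul_le_mul_of_nonneg_left h2 he0) hCpos.le) h3
                    (pow_nonneg (by linarith) _)
                  exact mul_nonneg hCpos.le (mul_nonneg he0 (pow_nonneg he0 _))
              _ = (b.choose r : ℝ) * e^r * (1-e)^(b-r) := by rw [← her]
              _ ≤ Phi r b e := h1
          have : e ≤ Phi r b e := by nlinarith [hW']
          rw [hid, hxe]; linarith
        · -- region D
          rw [hsum, hxe]
          exact tail_le r b hr (by omega) hcase2 he1
      calc g r b x ≤ 1 := le_of_mul_le_mul_left (by linarith [hgle1]) hxpos
        _ ≤ 1 + U r b := by linarith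
lemma epsb_pos (b : ℕ) (hr : 2 ≤ r) (hb : r ≤ b) : 0 < epsb r b := by
  apply Real.rpow_pos_of_pos
  have : (0:ℝ) < (b.choose r : ℝ) := by exact_mod_cast Nat.choose_pos hb
  have : (0:ℝ) < (r:ℝ) := by exact_mod_cast (by omega : 0 < r)
  positivity

lemma choose_mul_epsb_pow (b : ℕ) (hr : 2 ≤ r) (hb : r ≤ b) :
    (b.choose r : ℝ) * (epsb r b)^r = epsb r b / r := by
  have hC : (0:ℝ) < (b.choose r : ℝ) := by exact_mod_cast Nat.choose_pos hb
  have hrR : (0:ℝ) < (r:ℝ) := by exact_mod_cast (by omega : 0 < r)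
  have hP : (0:ℝ) < (r:ℝ) * (b.choose r : ℝ) := by positivity
  have hr1 : ((r:ℝ) - 1) ≠ 0 := by
    have : (2:ℝ) ≤ (r:ℝ) := by exact_mod_cast hr
    linarith
  have hpow : (epsb r b)^(r-1) = ((r:ℝ) * (b.choose r : ℝ))⁻¹ := by
    rw [epsb, ← Real.rpow_natCast (((r:ℝ) * (b.choose r : ℝ)) ^ (-(1:ℝ)/((r:ℝ)-1))) (r-1)]
    rw [← Real.rpow_mul hP.le]
    rw [show ((r - 1 : ℕ) : ℝ) = (r:ℝ) - 1 by
      push_cast [Nat.cast_sub (by omega : 1 ≤ r)]; ring]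
    rw [show -(1:ℝ)/((r:ℝ)-1) * ((r:ℝ)-1) = -1 by field_simp]
    exact Real.rpow_neg_one _
  have her : (epsb r b)^r = (epsb r b)^(r-1) * epsb r b := by
    rw [← pow_succ, show r - 1 + 1 = r by omega]
  rw [her, hpow]
  field_simp
lemma lower (b : ℕ) (hr : 2 ≤ r) (hb : r ≤ b)
    (he12 : epsb r b ≤ 1/2) (hbe : (b:ℝ) * epsb r b ≤ 1/2) :
    1 + Lo r b ≤ g r b (1 - epsb r b) := by
  have hrR : (2:ℝ) ≤ (r:ℝ) := by exact_mod_cast hr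
  have hep : 0 < epsb r b := epsb_pos r b hr hb
  have hbe1 : (b:ℝ) * epsb r b < 1 := by linarith
  have hPhile := Phi_le r b (by omega) hb hep.le hbe1
  rw [choose_mul_epsb_pow r b hr hb] at hPhile
  have hid := identity r b hb (epsb r b)
  have h1e : (0:ℝ) < 1 - epsb r b := by linarith
  have h1be : (0:ℝ) < 1 - (b:ℝ) * epsb r b := by linarith
  have hLo : (1 + Lo r b) * (1 - epsb r b)
      = 1 - (epsb r b / r) / (1 - (b:ℝ) * epsb r b) := by
    rw [Lo]
    field_simp
    ring
  have hg : (1 + Lo r b) * (1 - epsb r b) ≤ (1 - epsb r b) * g r b (1 - epsb r b) := by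
    rw [hLo, hid]
    have : Phi r b (epsb r b) ≤ (epsb r b / r) / (1 - (b:ℝ) * epsb r b) := hPhile
    linarith
  nlinarith [hg, h1e]
noncomputable def Mb (b : ℕ) : ℝ := sSup (g r b '' Set.Icc (0:ℝ) 1)
noncomputable def dd (b : ℕ) : ℝ :=
  (((r-1).factorial : ℝ) / (b:ℝ)^r) ^ (1/((r:ℝ)-1))
noncomputable def cc (b : ℕ) : ℝ := (1 - 1/(r:ℝ)) * dd r b
noncomputable def ratc (b : ℕ) : ℝ := ((r.factorial : ℝ) * (b.choose r : ℝ)) / (b:ℝ)^r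

lemma rpow_tendsto_one {f : ℕ → ℝ} (hf : Tendsto f atTop (nhds 1)) (q : ℝ) :
    Tendsto (fun b => f b ^ q) atTop (nhds 1) := by
  have hc : ContinuousAt (fun x : ℝ => x ^ q) 1 :=
    Real.continuousAt_rpow_const 1 q (Or.inl one_ne_zero)
  have := hc.tendsto.comp hf
  simpa [Function.comp_def] using this

lemma rpow_tendsto_zero {f : ℕ → ℝ} (hf : Tendsto f atTop (nhds 0)) {q : ℝ}
    (hq : 0 < q) : Tendsto (fun b => f b ^ q) atTop (nhds 0) := by
  have hc : ContinuousAt (fun x : ℝ => x ^ q) 0 :=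
    Real.continuousAt_rpow_const 0 q (Or.inr hq.le)
  have := hc.tendsto.comp hf
  simpa [Real.zero_rpow hq.ne', Function.comp_def] using this

lemma tendsto_ratc (hr : 2 ≤ r) : Tendsto (ratc r) atTop (nhds 1) := by
  have hprod : Tendsto (fun b : ℕ => ∏ j ∈ Finset.range r, (1 - (j:ℝ)/b))
      atTop (nhds 1) := by
    have h1 : Tendsto (fun b : ℕ => ∏ j ∈ Finset.range r, (1 - (j:ℝ)/b))
        atTop (nhds (∏ _j ∈ Finset.range r, (1:ℝ))) := by
      apply tendsto_finset_prod
      intro j _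
      have := tendsto_const_div_atTop_nhds_zero_nat (j:ℝ)
      have h2 := (tendsto_const_nhds (x := (1:ℝ)) (f := atTop)).sub this
      simpa using h2
    simpa using h1
  apply hprod.congr'
  filter_upwards [eventually_ge_atTop r, eventually_ge_atTop 1] with b hbr hb1
  have hbR : (0:ℝ) < b := by exact_mod_cast (by omega : 0 < b)
  rw [ratc]
  have hdesc : (r.factorial : ℝ) * (b.choose r : ℝ) = ∏ j ∈ Finset.range r, ((b:ℝ) - j) := by
    have h1 : (b.descFactorial r : ℕ) = r.factorial * b.choose r :=
      Nat.descFactorial_eq_factorial_mul_choose b r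
    have h2 : (b.descFactorial r : ℕ) = ∏ j ∈ Finset.range r, (b - j) :=
      Nat.descFactorial_eq_prod_range b r
    have := congrArg (fun n : ℕ => (n:ℝ)) (h1.symm.trans h2)
    push_cast at this
    rw [this]
    apply Finset.prod_congr rfl
    intro j hj
    have hjr : j < r := Finset.mem_range.mp hj
    rw [Nat.cast_sub (by omega : j ≤ b)]
  rw [hdesc]
  rw [show (b:ℝ)^r = ∏ _j ∈ Finset.range r, (b:ℝ) by
    rw [Finset.prod_const, Finset.card_range]]
  rw [← Finset.prod_div_distrib]
  apply Finset.prod_congr rfl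
  intro j hj
  field_simp
lemma tendsto_pow_inv_zero (hr : 1 ≤ r) (a : ℝ) :
    Tendsto (fun b : ℕ => a / (b:ℝ)^r) atTop (nhds 0) := by
  have h1 : Tendsto (fun b : ℕ => (b:ℝ)^r) atTop atTop :=
    (tendsto_pow_atTop (by omega : r ≠ 0)).comp tendsto_natCast_atTop_atTop
  exact Tendsto.div_atTop tendsto_const_nhds h1

lemma tendsto_dd (hr : 2 ≤ r) : Tendsto (dd r) atTop (nhds 0) := by
  have hq : (0:ℝ) < 1/((r:ℝ)-1) := by
    have h2 : (2:ℝ) ≤ (r:ℝ) := by exact_mod_cast hr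
    have : (0:ℝ) < (r:ℝ) - 1 := by linarith
    positivity
  exact rpow_tendsto_zero (tendsto_pow_inv_zero r (by omega) _) hq

lemma tendsto_epsb_div_dd (hr : 2 ≤ r) :
    Tendsto (fun b => epsb r b / dd r b) atTop (nhds 1) := by
  have hratinv : Tendsto (fun b => (ratc r b)⁻¹) atTop (nhds 1) := by
    have := (tendsto_ratc r hr).inv₀ one_ne_zero
    simpa using this
  have := rpow_tendsto_one hratinv (1/((r:ℝ)-1))
  apply this.congr'
  filter_upwards [eventually_ge_atTop r, eventually_ge_atTop 1] with b hbr hb1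
  have hbR : (0:ℝ) < b := by exact_mod_cast (by omega : 0 < b)
  have hC : (0:ℝ) < (b.choose r : ℝ) := by exact_mod_cast Nat.choose_pos hbr
  have hrR : (2:ℝ) ≤ (r:ℝ) := by exact_mod_cast hr
  have hrf : (0:ℝ) < ((r-1).factorial : ℝ) := by exact_mod_cast (r-1).factorial_pos
  have hP : (0:ℝ) < (r:ℝ) * (b.choose r : ℝ) := by positivity
  have hinner : (0:ℝ) < ((r-1).factorial : ℝ) / (b:ℝ)^r := by positivity
  have hepsb : epsb r b = ((r:ℝ) * (b.choose r : ℝ))⁻¹ ^ (1/((r:ℝ)-1)) := by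
    rw [epsb, show -(1:ℝ)/((r:ℝ)-1) = -(1/((r:ℝ)-1)) by ring,
      Real.rpow_neg hP.le, ← Real.inv_rpow hP.le]
  rw [hepsb, dd, ← Real.div_rpow (by positivity) hinner.le]
  congr 1
  rw [ratc]
  have hfact : (r.factorial : ℝ) = (r:ℝ) * ((r-1).factorial : ℝ) := by
    rw [show r = (r-1) + 1 by omega]
    push_cast [Nat.factorial_succ]
    ring_nf
  rw [hfact]
  field_simp
lemma tendsto_be (hr : 2 ≤ r) :
    Tendsto (fun b : ℕ => (b:ℝ) * epsb r b) atTop (nhds 0) := by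
  have hrR : (2:ℝ) ≤ (r:ℝ) := by exact_mod_cast hr
  have hq : (0:ℝ) < 1/((r:ℝ)-1) := by
    have : (0:ℝ) < (r:ℝ) - 1 := by linarith
    positivity
  have hinner : Tendsto (fun b : ℕ => (ratc r b)⁻¹ * (((r-1).factorial : ℝ) / b))
      atTop (nhds 0) := by
    have h1 := (tendsto_ratc r hr).inv₀ one_ne_zero
    have h2 := tendsto_const_div_atTop_nhds_zero_nat (((r-1).factorial : ℝ))
    have := h1.mul h2
    simpa using this
  have := rpow_tendsto_zero hinner hq
  apply this.congr'
  filter_upwards [eventually_ge_atTop r, eventually_ge_atTop 1] with b hbr hb1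
  have hbR : (0:ℝ) < b := by exact_mod_cast (by omega : 0 < b)
  have hC : (0:ℝ) < (b.choose r : ℝ) := by exact_mod_cast Nat.choose_pos hbr
  have hrpos : (0:ℝ) < (r:ℝ) := by linarith
  have hP : (0:ℝ) < (r:ℝ) * (b.choose r : ℝ) := by positivity
  have hinner_eq : (ratc r b)⁻¹ * (((r-1).factorial : ℝ) / b)
      = (b:ℝ)^(r-1) * ((r:ℝ) * (b.choose r : ℝ))⁻¹ := by
    rw [ratc]
    have hfact : (r.factorial : ℝ) = (r:ℝ) * ((r-1).factorial : ℝ) := by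
      rw [show r = (r-1) + 1 by omega]
      push_cast [Nat.factorial_succ]
      ring_nf
    have hbpow : (b:ℝ)^r = (b:ℝ)^(r-1) * b := by
      rw [← pow_succ, show r - 1 + 1 = r by omega]
    have hrf : (0:ℝ) < ((r-1).factorial : ℝ) := by exact_mod_cast (r-1).factorial_pos
    rw [hfact, hbpow]
    field_simp
  rw [hinner_eq]
  rw [Real.mul_rpow (by positivity) (by positivity)]
  have h1 : ((b:ℝ)^(r-1)) ^ (1/((r:ℝ)-1)) = (b:ℝ) := by
    rw [← Real.rpow_natCast (b:ℝ) (r-1), ← Real.rpow_mul hbR.le]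
    rw [show ((r - 1 : ℕ) : ℝ) = (r:ℝ) - 1 by
      push_cast [Nat.cast_sub (by omega : 1 ≤ r)]; ring]
    rw [show ((r:ℝ)-1) * (1/((r:ℝ)-1)) = 1 by
      have h9 : (r:ℝ) - 1 ≠ 0 := by linarith
      field_simp, Real.rpow_one]
  have h2 : (((r:ℝ) * (b.choose r : ℝ))⁻¹) ^ (1/((r:ℝ)-1)) = epsb r b := by
    rw [epsb, show -(1:ℝ)/((r:ℝ)-1) = -(1/((r:ℝ)-1)) by ring,
      Real.rpow_neg hP.le, ← Real.inv_rpow hP.le]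
  rw [h1, h2]

lemma tendsto_epsb (hr : 2 ≤ r) : Tendsto (epsb r) atTop (nhds 0) := by
  apply tendsto_of_tendsto_of_tendsto_of_le_of_le' tendsto_const_nhds (tendsto_be r hr)
  · filter_upwards [eventually_ge_atTop r] with b hbr
    exact (epsb_pos r b hr hbr).le
  · filter_upwards [eventually_ge_atTop r, eventually_ge_atTop 1] with b hbr hb1
    have hbR : (1:ℝ) ≤ b := by exact_mod_cast hb1
    nlinarith [epsb_pos r b hr hbr]

lemma tendsto_tb (hr : 2 ≤ r) : Tendsto (tb r) atTop (nhds 0) := by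
  have hrR : (2:ℝ) ≤ (r:ℝ) := by exact_mod_cast hr
  have hy : (0:ℝ) < (2*(r:ℝ)-1)/(2*((r:ℝ)-1)) := by
    have h1 : (0:ℝ) < 2*(r:ℝ)-1 := by linarith
    have h2 : (0:ℝ) < 2*((r:ℝ)-1) := by linarith
    positivity
  have := (tendsto_rpow_neg_atTop hy).comp tendsto_natCast_atTop_atTop
  apply this.congr
  intro b
  simp only [Function.comp_apply, tb, neg_div]

lemma tendsto_btb (hr : 2 ≤ r) :
    Tendsto (fun b : ℕ => (b:ℝ) * tb r b) atTop (nhds 0) := by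
  have hrR : (2:ℝ) ≤ (r:ℝ) := by exact_mod_cast hr
  have hy : (0:ℝ) < 1/(2*((r:ℝ)-1)) := by
    have h2 : (0:ℝ) < 2*((r:ℝ)-1) := by linarith
    positivity
  have h := (tendsto_rpow_neg_atTop hy).comp tendsto_natCast_atTop_atTop
  apply h.congr'
  filter_upwards [eventually_ge_atTop 1] with b hb1
  have hbR : (0:ℝ) < b := by exact_mod_cast (by omega : 0 < b)
  simp only [Function.comp_apply]
  have hbt : (b:ℝ) * tb r b = (b:ℝ) ^ ((1:ℝ) + -(2*(r:ℝ)-1)/(2*((r:ℝ)-1))) := by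
    rw [Real.rpow_add hbR, Real.rpow_one, tb]
  rw [hbt]
  congr 1
  have h2 : (2*((r:ℝ)-1)) ≠ 0 := by nlinarith
  have h3 : (r:ℝ) - 1 ≠ 0 := by linarith
  field_simp
  ring
lemma tendsto_ob (hr : 2 ≤ r) :
    Tendsto (fun b : ℕ => (1 - tb r b)^(b-r)) atTop (nhds 1) := by
  apply tendsto_of_tendsto_of_tendsto_of_le_of_le'
    (g := fun b : ℕ => 1 - (b:ℝ) * tb r b) (h := fun _ => (1:ℝ))
  · have := (tendsto_const_nhds (x := (1:ℝ)) (f := atTop (α := ℕ))).sub (tendsto_btb r hr)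
    simpa using this
  · exact tendsto_const_nhds
  · filter_upwards [(tendsto_tb r hr).eventually_le_const (by norm_num : (0:ℝ) < 1/2)] with b htb
    have htb0 : 0 ≤ tb r b := Real.rpow_nonneg (Nat.cast_nonneg b) _
    have h1 := one_add_mul_le_pow (a := -(tb r b)) (by linarith) (b-r)
    have h2 : ((b - r : ℕ):ℝ) * tb r b ≤ (b:ℝ) * tb r b := by
      apply mul_le_mul_of_nonneg_right _ htb0
      exact_mod_cast Nat.sub_le b r
    calc 1 - (b:ℝ) * tb r b ≤ 1 + ((b-r:ℕ):ℝ) * (-(tb r b)) := by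
          rw [mul_neg]; linarith
      _ ≤ (1 + -(tb r b))^(b-r) := h1
      _ = (1 - tb r b)^(b-r) := by ring_nf
  · filter_upwards [(tendsto_tb r hr).eventually_le_const (by norm_num : (0:ℝ) < 1/2)] with b htb
    have htb0 : 0 ≤ tb r b := Real.rpow_nonneg (Nat.cast_nonneg b) _
    exact pow_le_one₀ (by linarith) (by linarith)

lemma exp_bound_aux (n b : ℕ) (K : ℝ) (hK : 0 < K) (hb : (0:ℝ) < b)
    (hKb : K/(b:ℝ) ≤ 1/2) (hn : n ≤ b) :
    Real.exp (-(2*K)) ≤ (1 - K/b)^n := by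
  set δ : ℝ := K/b with hδ
  have hδ0 : 0 < δ := div_pos hK hb
  have h1 : (1:ℝ) ≤ (1-δ)*(1+2*δ) := by nlinarith
  have h2 : (1:ℝ) ≤ ((1-δ)*(1+2*δ))^n := one_le_pow₀ h1
  have h3 : (1+2*δ)^n ≤ Real.exp (2*K) := by
    have ha : (1+2*δ) ≤ Real.exp (2*δ) := by
      have := Real.add_one_le_exp (2*δ)
      linarith
    have hb1 : (1+2*δ)^n ≤ (Real.exp (2*δ))^n :=
      pow_le_pow_left₀ (by linarith) ha n
    have hc : (Real.exp (2*δ))^n = Real.exp ((n:ℝ) * (2*δ)) :=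
      (Real.exp_nat_mul (2*δ) n).symm
    have hd : (n:ℝ) * (2*δ) ≤ 2*K := by
      have : (n:ℝ) ≤ b := by exact_mod_cast hn
      have : (n:ℝ) * (2*δ) ≤ (b:ℝ) * (2*δ) := by
        apply mul_le_mul_of_nonneg_right this (by linarith)
      calc (n:ℝ) * (2*δ) ≤ (b:ℝ) * (2*δ) := this
        _ = 2*K := by rw [hδ]; field_simp
    calc (1+2*δ)^n ≤ (Real.exp (2*δ))^n := hb1
      _ = Real.exp ((n:ℝ) * (2*δ)) := hc
      _ ≤ Real.exp (2*K) := Real.exp_le_exp.mpr hd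
  have h4 : (0:ℝ) < (1+2*δ)^n := pow_pos (by linarith) n
  have h5 : ((1+2*δ)^n)⁻¹ ≤ (1-δ)^n := by
    rw [inv_le_iff_one_le_mul₀ h4]
    calc (1:ℝ) ≤ ((1-δ)*(1+2*δ))^n := h2
      _ = (1-δ)^n * (1+2*δ)^n := mul_pow _ _ _
  calc Real.exp (-(2*K)) = (Real.exp (2*K))⁻¹ := by rw [Real.exp_neg]
    _ ≤ ((1+2*δ)^n)⁻¹ := by
        apply inv_anti₀ h4 h3
    _ ≤ (1-δ)^n := h5
lemma eventually_W (hr : 2 ≤ r) : ∀ᶠ b in atTop, 1 ≤ W r b := by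
  have hrR : (2:ℝ) ≤ (r:ℝ) := by exact_mod_cast hr
  have hr1 : (0:ℝ) < (r:ℝ) - 1 := by linarith
  have hKcpos := Kc_pos r (by omega)
  have hfac : (0:ℝ) < (r.factorial : ℝ) := by exact_mod_cast r.factorial_pos
  have hhalf : Tendsto (fun b : ℕ => (b:ℝ)^((1:ℝ)/2)) atTop atTop :=
    (tendsto_rpow_atTop (by norm_num)).comp tendsto_natCast_atTop_atTop
  filter_upwards [eventually_ge_atTop r, eventually_ge_atTop 1,
    (tendsto_ratc r hr).eventually (eventually_ge_nhds (by norm_num : (1:ℝ)/2 < 1)),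
    hhalf.eventually_ge_atTop (2 * (r.factorial : ℝ) * Real.exp (2 * Kc r)),
    (tendsto_const_div_atTop_nhds_zero_nat (Kc r)).eventually
      (eventually_le_nhds (by norm_num : (0:ℝ) < 1/2))]
    with b hbr hb1 hrat hbig hKb2
  have hbR : (0:ℝ) < b := by exact_mod_cast (by omega : 0 < b)
  have htbp : (tb r b)^(r-1) = (b:ℝ)^(-(2*(r:ℝ)-1)/2) := by
    rw [tb, ← Real.rpow_natCast ((b:ℝ) ^ (-(2*(r:ℝ)-1)/(2*((r:ℝ)-1)))) (r-1),
      ← Real.rpow_mul hbR.le]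
    congr 1
    rw [show ((r - 1 : ℕ) : ℝ) = (r:ℝ) - 1 by
      push_cast [Nat.cast_sub (by omega : 1 ≤ r)]; ring]
    field_simp
  have hb2 : (b:ℝ)^((1:ℝ)/2) = ((b:ℝ)^(r:ℕ)) * (tb r b)^(r-1) := by
    rw [htbp, ← Real.rpow_natCast (b:ℝ) r, ← Real.rpow_add hbR]
    congr 1
    push_cast
    ring
  have hX : Real.exp (-(2 * Kc r)) ≤ (1 - Kc r/b)^(b-r) :=
    exp_bound_aux (b-r) b (Kc r) hKcpos hbR hKb2 (Nat.sub_le b r)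
  have hWeq : W r b = ratc r b * (b:ℝ)^((1:ℝ)/2) / (r.factorial : ℝ)
      * (1 - Kc r/b)^(b-r) := by
    rw [W, ratc, hb2]
    have hbrne : ((b:ℝ)^(r:ℕ)) ≠ 0 := by positivity
    field_simp
  have hXnn : (0:ℝ) ≤ (1 - Kc r/b)^(b-r) := le_trans (Real.exp_pos _).le hX
  have hstep1 : (1/2) * (b:ℝ)^((1:ℝ)/2) / (r.factorial : ℝ) * Real.exp (-(2 * Kc r))
      ≤ W r b := by
    rw [hWeq]
    have hb12 : (0:ℝ) ≤ (b:ℝ)^((1:ℝ)/2) := Real.rpow_nonneg hbR.le _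
    apply mul_le_mul _ hX (Real.exp_pos _).le
    · exact div_nonneg (mul_nonneg (le_trans (by norm_num) hrat) hb12) hfac.le
    · apply div_le_div_of_nonneg_right _ hfac.le
      exact mul_le_mul_of_nonneg_right hrat hb12
  set B := (b:ℝ)^((1:ℝ)/2) with hB
  set E := Real.exp (2 * Kc r) with hE
  have hEpos : 0 < E := Real.exp_pos _
  have hexpneg : Real.exp (-(2 * Kc r)) = E⁻¹ := by rw [hE, ← Real.exp_neg]
  have h6 : 2*(r.factorial:ℝ) ≤ B * E⁻¹ := by
    have := mul_le_mul_of_nonneg_right hbig (inv_pos.mpr hEpos).le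
    have hEE : E * E⁻¹ = 1 := mul_inv_cancel₀ hEpos.ne'
    nlinarith [this, hEE]
  have h7 : (1/2) * B / (r.factorial : ℝ) * E⁻¹ = (B * E⁻¹)/(2*(r.factorial:ℝ)) := by
    ring
  refine le_trans ?_ hstep1
  rw [hexpneg, h7, le_div_iff₀ (by positivity)]
  linarith
lemma Mb_bounds (hr : 2 ≤ r) : ∀ᶠ b in atTop,
    (1 + Lo r b ≤ Mb r b) ∧ (Mb r b ≤ 1 + U r b) ∧ 0 < Lo r b ∧ 0 ≤ U r b := by
  have hrR : (2:ℝ) ≤ (r:ℝ) := by exact_mod_cast hr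
  filter_upwards [eventually_ge_atTop (4*r+1),
    (tendsto_btb r hr).eventually (eventually_le_nhds (by norm_num : (0:ℝ) < 1)),
    (tendsto_const_div_atTop_nhds_zero_nat (Kc r)).eventually
      (eventually_le_nhds (by norm_num : (0:ℝ) < 1/2)),
    eventually_W r hr,
    (tendsto_epsb r hr).eventually (eventually_le_nhds (by norm_num : (0:ℝ) < 1/2)),
    (tendsto_be r hr).eventually (eventually_le_nhds (by norm_num : (0:ℝ) < 1/4))]
    with b hb4 hbtb hKb hW heps hbe
  have hbr : r ≤ b := by omega
  have hbR : (0:ℝ) < b := by exact_mod_cast (by omega : 0 < b)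
  have htK : tb r b ≤ Kc r / b := by
    rw [le_div_iff₀ hbR]
    calc tb r b * b = (b:ℝ) * tb r b := by ring
      _ ≤ 1 := hbtb
      _ ≤ Kc r := one_le_Kc r (by omega)
  have htb1 : tb r b < 1 := by
    have : tb r b ≤ 1/2 := htK.trans hKb
    linarith
  have hupper := upper r b hr hb4 htK hKb hW
  have hU0 : 0 ≤ U r b := U_nonneg r b hr htb1
  have hlower := lower r b hr hbr heps (by linarith)
  have hep := epsb_pos r b hr hbr
  have hbdd : BddAbove (g r b '' Set.Icc (0:ℝ) 1) := by
    refine ⟨1 + U r b, ?_⟩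
    rintro y ⟨x, hx, rfl⟩
    exact hupper x hx
  have hMle : Mb r b ≤ 1 + U r b := by
    apply Real.sSup_le _ (by linarith)
    rintro y ⟨x, hx, rfl⟩
    exact hupper x hx
  have hmem : (1 - epsb r b) ∈ Set.Icc (0:ℝ) 1 := ⟨by linarith, by linarith⟩
  have hMge : 1 + Lo r b ≤ Mb r b :=
    le_trans hlower (le_csSup hbdd (Set.mem_image_of_mem _ hmem))
  have hLopos : 0 < Lo r b := by
    have h1be : (3:ℝ)/4 ≤ 1 - (b:ℝ) * epsb r b := by linarith
    have hrpos : (0:ℝ) < (r:ℝ) := by linarith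
    have ha : (1/(r:ℝ)) ≤ 1/2 := by
      rw [div_le_div_iff₀ hrpos (by norm_num)]; linarith
    have h2 : (1/(r:ℝ))/(1 - (b:ℝ) * epsb r b) ≤ 2/3 := by
      rw [div_le_iff₀ (by linarith)]
      nlinarith
    have h3 : (0:ℝ) < 1 - (1/(r:ℝ))/(1 - (b:ℝ)*epsb r b) := by linarith
    have h4 : (0:ℝ) < 1 - epsb r b := by linarith
    rw [Lo]
    exact div_pos (mul_pos hep h3) h4
  exact ⟨hMge, hMle, hLopos, hU0⟩
lemma dd_pos (b : ℕ) (hr : 2 ≤ r) (hb : 1 ≤ b) : 0 < dd r b := by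
  apply Real.rpow_pos_of_pos
  have h1 : (0:ℝ) < ((r-1).factorial : ℝ) := by exact_mod_cast (r-1).factorial_pos
  have h2 : (0:ℝ) < (b:ℝ) := by exact_mod_cast hb
  positivity

lemma one_sub_inv_r_pos (hr : 2 ≤ r) : (0:ℝ) < 1 - 1/(r:ℝ) := by
  have hrR : (2:ℝ) ≤ (r:ℝ) := by exact_mod_cast hr
  have : 1/(r:ℝ) ≤ 1/2 := by
    rw [div_le_div_iff₀ (by linarith) (by norm_num)]; linarith
  linarith

lemma tendsto_U_div_cc (hr : 2 ≤ r) :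
    Tendsto (fun b => U r b / cc r b) atTop (nhds 1) := by
  have hrR : (2:ℝ) ≤ (r:ℝ) := by exact_mod_cast hr
  have h1 := tendsto_epsb_div_dd r hr
  have h2 := rpow_tendsto_one (tendsto_ob r hr) (-(1:ℝ)/((r:ℝ)-1))
  have h3 : Tendsto (fun b : ℕ => (1 - tb r b)⁻¹) atTop (nhds 1) := by
    have h4 := (tendsto_const_nhds (x := (1:ℝ)) (f := atTop (α := ℕ))).sub (tendsto_tb r hr)
    have h5 : Tendsto (fun b : ℕ => 1 - tb r b) atTop (nhds 1) := by simpa using h4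
    simpa using h5.inv₀ one_ne_zero
  have hprod := (h1.mul h2).mul h3
  rw [show (1:ℝ) * 1 * 1 = 1 by norm_num] at hprod
  apply hprod.congr'
  filter_upwards [eventually_ge_atTop r, eventually_ge_atTop 1,
    (tendsto_tb r hr).eventually (eventually_le_nhds (by norm_num : (0:ℝ) < 1/2))]
    with b hbr hb1 htb
  have hbR : (0:ℝ) < b := by exact_mod_cast hb1
  have htb0 : 0 ≤ tb r b := Real.rpow_nonneg hbR.le _
  have hC : (0:ℝ) < (b.choose r : ℝ) := by exact_mod_cast Nat.choose_pos hbr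
  have hrpos : (0:ℝ) < (r:ℝ) := by linarith
  have hobpos : (0:ℝ) < (1 - tb r b)^(b-r) := pow_pos (by linarith) _
  have hsplit : ((r:ℝ) * Ab r b) ^ (-(1:ℝ)/((r:ℝ)-1))
      = epsb r b * ((1 - tb r b)^(b-r)) ^ (-(1:ℝ)/((r:ℝ)-1)) := by
    rw [Ab, show (r:ℝ) * ((b.choose r : ℝ) * (1 - tb r b)^(b-r))
      = ((r:ℝ) * (b.choose r : ℝ)) * (1 - tb r b)^(b-r) by ring]
    rw [Real.mul_rpow (by positivity) hobpos.le, epsb]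
  have hddpos := dd_pos r b hr hb1
  have h1r := one_sub_inv_r_pos r hr
  have h1tb : (0:ℝ) < 1 - tb r b := by linarith
  have hX : U r b / cc r b
      = (epsb r b * ((1 - tb r b)^(b-r)) ^ (-(1:ℝ)/((r:ℝ)-1)))
        / ((1 - tb r b) * dd r b) := by
    rw [U, cc, hsplit, div_div]
    rw [show (1 - tb r b) * ((1 - 1/(r:ℝ)) * dd r b)
      = (1 - 1/(r:ℝ)) * ((1 - tb r b) * dd r b) by ring]
    exact mul_div_mul_left _ _ h1r.ne'
  rw [hX, ← div_eq_mul_inv, div_mul_eq_mul_div, div_div,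
    mul_comm (dd r b) (1 - tb r b)]

lemma tendsto_Lo_div_cc (hr : 2 ≤ r) :
    Tendsto (fun b => Lo r b / cc r b) atTop (nhds 1) := by
  have hrR : (2:ℝ) ≤ (r:ℝ) := by exact_mod_cast hr
  have h1r := one_sub_inv_r_pos r hr
  have h1 := tendsto_epsb_div_dd r hr
  have hbe1 : Tendsto (fun b : ℕ => 1 - (b:ℝ) * epsb r b) atTop (nhds 1) := by
    have := (tendsto_const_nhds (x := (1:ℝ)) (f := atTop (α := ℕ))).sub (tendsto_be r hr)
    simpa using this
  have hnum : Tendsto (fun b : ℕ => 1 - (1/(r:ℝ))/(1 - (b:ℝ) * epsb r b))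
      atTop (nhds (1 - 1/(r:ℝ))) := by
    have hd := (tendsto_const_nhds (x := 1/(r:ℝ)) (f := atTop (α := ℕ))).div hbe1 one_ne_zero
    have := (tendsto_const_nhds (x := (1:ℝ)) (f := atTop (α := ℕ))).sub hd
    simpa using this
  have heps1 : Tendsto (fun b : ℕ => (1 - 1/(r:ℝ)) * (1 - epsb r b))
      atTop (nhds (1 - 1/(r:ℝ))) := by
    have h5 : Tendsto (fun b : ℕ => 1 - epsb r b) atTop (nhds 1) := by
      have := (tendsto_const_nhds (x := (1:ℝ)) (f := atTop (α := ℕ))).sub (tendsto_epsb r hr)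
      simpa using this
    have := (tendsto_const_nhds (x := 1 - 1/(r:ℝ)) (f := atTop (α := ℕ))).mul h5
    simpa using this
  have hfrac := hnum.div heps1 h1r.ne'
  have hprod := h1.mul hfrac
  rw [show (1:ℝ) * ((1 - 1/(r:ℝ))/(1 - 1/(r:ℝ))) = 1 by
    rw [div_self h1r.ne', mul_one]] at hprod
  apply hprod.congr'
  filter_upwards [eventually_ge_atTop r, eventually_ge_atTop 1,
    (tendsto_epsb r hr).eventually (eventually_le_nhds (by norm_num : (0:ℝ) < 1/2)),
    (tendsto_be r hr).eventually (eventually_le_nhds (by norm_num : (0:ℝ) < 1/2))]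
    with b hbr hb1 heps hbe
  have hbR : (0:ℝ) < b := by exact_mod_cast hb1
  have hep := epsb_pos r b hr hbr
  have hddpos := dd_pos r b hr hb1
  have h1e : (0:ℝ) < 1 - epsb r b := by linarith
  have h1be : (0:ℝ) < 1 - (b:ℝ) * epsb r b := by linarith
  have hrpos : (0:ℝ) < (r:ℝ) := by linarith
  rw [Lo, cc]
  simp only [Pi.div_apply]
  field_simp [hddpos.ne', h1r.ne', h1e.ne', h1be.ne', hrpos.ne']
lemma tendsto_cc (hr : 2 ≤ r) : Tendsto (cc r) atTop (nhds 0) := by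
  have h := (tendsto_const_nhds (x := 1 - 1/(r:ℝ)) (f := atTop (α := ℕ))).mul (tendsto_dd r hr)
  rw [show (1 - 1/(r:ℝ)) * 0 = 0 by ring] at h
  exact h

lemma tendsto_Lo_zero (hr : 2 ≤ r) : Tendsto (Lo r) atTop (nhds 0) := by
  have h := (tendsto_Lo_div_cc r hr).mul (tendsto_cc r hr)
  rw [one_mul] at h
  apply h.congr'
  filter_upwards [eventually_ge_atTop 1] with b hb1
  have hccpos : 0 < cc r b := mul_pos (one_sub_inv_r_pos r hr) (dd_pos r b hr hb1)
  rw [div_mul_cancel₀ _ hccpos.ne']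

lemma final (hr : 2 ≤ r) :
    Tendsto (fun b : ℕ => (1 - 1/Mb r b)/cc r b) atTop (nhds 1) := by
  have hlow : Tendsto (fun b => (Lo r b / cc r b) * (1 + Lo r b)⁻¹) atTop (nhds 1) := by
    have h1 : Tendsto (fun b : ℕ => 1 + Lo r b) atTop (nhds 1) := by
      have := (tendsto_const_nhds (x := (1:ℝ)) (f := atTop (α := ℕ))).add (tendsto_Lo_zero r hr)
      simpa using this
    have h2 := h1.inv₀ one_ne_zero
    rw [inv_one] at h2
    have := (tendsto_Lo_div_cc r hr).mul h2
    simpa using this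
  apply tendsto_of_tendsto_of_tendsto_of_le_of_le' hlow (tendsto_U_div_cc r hr)
  · filter_upwards [Mb_bounds r hr, eventually_ge_atTop 1] with b hM hb1
    obtain ⟨hge, hle, hLo, hU0⟩ := hM
    have hccpos : 0 < cc r b := mul_pos (one_sub_inv_r_pos r hr) (dd_pos r b hr hb1)
    have hMpos : (0:ℝ) < Mb r b := by linarith
    have h2 : 1/Mb r b ≤ 1/(1 + Lo r b) :=
      one_div_le_one_div_of_le (by linarith) hge
    have h3 : Lo r b/(1+Lo r b) = 1 - 1/(1+Lo r b) := by
      field_simp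
      ring
    have h1' : Lo r b/(1 + Lo r b) ≤ 1 - 1/Mb r b := by linarith
    have h4 : Lo r b / cc r b * (1 + Lo r b)⁻¹ = (Lo r b/(1 + Lo r b))/cc r b := by
      ring
    rw [h4]
    exact div_le_div_of_nonneg_right h1' hccpos.le
  · filter_upwards [Mb_bounds r hr, eventually_ge_atTop 1] with b hM hb1
    obtain ⟨hge, hle, hLo, hU0⟩ := hM
    have hccpos : 0 < cc r b := mul_pos (one_sub_inv_r_pos r hr) (dd_pos r b hr hb1)
    have hMpos : (0:ℝ) < Mb r b := by linarith
    have h2 : 1/(1 + U r b) ≤ 1/Mb r b :=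
      one_div_le_one_div_of_le hMpos hle
    have h3 : 1 - 1/(1 + U r b) = U r b/(1+U r b) := by
      field_simp
      ring
    have h5 : U r b/(1+U r b) ≤ U r b := by
      apply div_le_self hU0 (by linarith)
    have h1' : 1 - 1/Mb r b ≤ U r b := by linarith
    exact div_le_div_of_nonneg_right h1' hccpos.le

end PCaux

theorem pc_regular_tree_asymptotics (r : ℕ) (hr : 2 ≤ r) :
    Filter.Tendsto
      (fun b : ℕ =>
        (1 - 1 / sSup (g r b '' Set.Icc (0 : ℝ) 1)) /
          ((1 - 1 / (r : ℝ)) *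
            (((r - 1).factorial : ℝ) / (b : ℝ) ^ r) ^ (1 / ((r : ℝ) - 1))))
      Filter.atTop (nhds 1) :=
  PCaux.final r hr
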